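/- Necessary and sufficient condition for segment intersection (Theorem 5 / thcnsip): let p₁ = (x₁,y₁), p₂ = (x₂,y₂), q₁ = (x₁',y₁'), q₂ = (x₂',y₂') be points of ℝ² with p₁ ≠ p₂, q₁ ≠ q₂, and such that the four points p₁, p₂, q₁, q₂ are not all collinear. Then the closed segments [p₁,p₂] and [q₁,q₂] have a common point if and only if both ((y₂−y₁)x₁' − (x₂−x₁)y₁' − x₁y₂ + y₁x₂) · ((y₂−y₁)x₂' − (x₂−x₁)y₂' − x₁y₂ + y₁x₂) ≤ 0 and ((y₂'−y₁')x₁ − (x₂'−x₁')y₁ − x₁'y₂' + y₁'x₂') · ((y₂'−y₁')x₂ − (x₂'−x₁')y₂ − x₁'y₂' + y₁'x₂') ≤ 0. -/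

import Mathlib

lemma on_line_aux (x₁ y₁ x₂ y₂ x y : ℝ)
    (hp : ((x₁, y₁) : ℝ × ℝ) ≠ (x₂, y₂))
    (h : (y₂ - y₁) * x - (x₂ - x₁) * y - x₁ * y₂ + y₁ * x₂ = 0) :
    ∃ r : ℝ, ((x, y) : ℝ × ℝ) = r • ((x₂ - x₁, y₂ - y₁) : ℝ × ℝ) + (x₁, y₁) := by
  by_cases hx : x₂ - x₁ = 0
  · have hy : y₂ - y₁ ≠ 0 := by
      intro hy; apply hp; ext <;> simp <;> linarith
    refine ⟨(y - y₁) / (y₂ - y₁), ?_⟩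
    have hxx : x = x₁ := by
      have : (y₂ - y₁) * (x - x₁) = 0 := by linear_combination h + (y - y₁) * hx
      rcases mul_eq_zero.1 this with h' | h'
      · exact absurd h' hy
      · linarith
    simp only [Prod.smul_mk, Prod.mk_add_mk, Prod.mk.injEq, smul_eq_mul]
    constructor
    · rw [hx]; ring_nf; linarith
    · field_simp
      ring
  · refine ⟨(x - x₁) / (x₂ - x₁), ?_⟩
    simp only [Prod.smul_mk, Prod.mk_add_mk, Prod.mk.injEq, smul_eq_mul]
    constructor
    · field_simp
      ring
    · field_simp
      linear_combination -h

lemma collinear_aux (x₁ y₁ x₂ y₂ x₁' y₁' x₂' y₂' : ℝ)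
    (hp : ((x₁, y₁) : ℝ × ℝ) ≠ (x₂, y₂))
    (h1 : (y₂ - y₁) * x₁' - (x₂ - x₁) * y₁' - x₁ * y₂ + y₁ * x₂ = 0)
    (h2 : (y₂ - y₁) * x₂' - (x₂ - x₁) * y₂' - x₁ * y₂ + y₁ * x₂ = 0) :
    Collinear ℝ ({(x₁, y₁), (x₂, y₂), (x₁', y₁'), (x₂', y₂')} : Set (ℝ × ℝ)) := by
  rw [collinear_iff_of_mem (Set.mem_insert ((x₁, y₁) : ℝ × ℝ) _)]
  refine ⟨(x₂ - x₁, y₂ - y₁), ?_⟩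
  intro p hp'
  simp only [Set.mem_insert_iff, Set.mem_singleton_iff] at hp'
  rcases hp' with rfl | rfl | rfl | rfl
  · exact on_line_aux x₁ y₁ x₂ y₂ x₁ y₁ hp (by ring)
  · exact on_line_aux x₁ y₁ x₂ y₂ x₂ y₂ hp (by ring)
  · exact on_line_aux x₁ y₁ x₂ y₂ x₁' y₁' hp h1
  · exact on_line_aux x₁ y₁ x₂ y₂ x₂' y₂' hp h2

lemma div_bounds_aux (a b : ℝ) (hab : a * b ≤ 0) (hne : a - b ≠ 0) :
    0 ≤ a / (a - b) ∧ a / (a - b) ≤ 1 := by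
  rcases (sub_ne_zero.1 hne).lt_or_gt with h | h
  · have ha : a ≤ 0 := by nlinarith
    have hb : 0 ≤ b := by nlinarith
    have hd : a - b < 0 := by linarith
    constructor
    · rw [div_nonneg_iff]; right; exact ⟨ha, hd.le⟩
    · rw [div_le_one_of_neg hd]; linarith
  · have ha : 0 ≤ a := by nlinarith
    have hb : b ≤ 0 := by nlinarith
    have hd : 0 < a - b := by linarith
    exact ⟨div_nonneg ha hd.le, (div_le_one hd).2 (by linarith)⟩

lemma combo_aux (a b u v : ℝ) (hu : 0 ≤ u) (hv : 0 ≤ v) (huv : u + v = 1)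
    (h : u * a + v * b = 0) : a * b ≤ 0 := by
  have h1 : u * (a * a) + v * (a * b) = 0 := by linear_combination a * h
  have h2 : u * (a * b) + v * (b * b) = 0 := by linear_combination b * h
  have h3 : a * b = -(u * (a * a)) - v * (b * b) := by
    linear_combination h1 + h2 - (a * b) * huv
  linarith [mul_nonneg hu (mul_self_nonneg a), mul_nonneg hv (mul_self_nonneg b)]

lemma seg_point_aux (a b c d x₁ x₂ x₁' x₂' : ℝ) (hK : a - b ≠ 0) (hK' : c - d ≠ 0)
    (hid : (x₁' * (a - b) + a * (x₂' - x₁')) * (c - d) =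
      (x₁ * (c - d) + c * (x₂ - x₁)) * (a - b)) :
    (1 - a / (a - b)) * x₁' + (a / (a - b)) * x₂' =
      (1 - c / (c - d)) * x₁ + (c / (c - d)) * x₂ := by
  have h1 : a / (a - b) * (a - b) = a := div_mul_cancel₀ a hK
  have h2 : c / (c - d) * (c - d) = c := div_mul_cancel₀ c hK'
  apply mul_right_cancel₀ (mul_ne_zero hK hK')
  linear_combination ((x₂' - x₁') * (c - d)) * h1 - ((x₂ - x₁) * (a - b)) * h2 + hid

/-- Necessary and sufficient condition for segment intersection (Theorem 5): for
nondegenerate segments `[p₁,p₂]` and `[q₁,q₂]` in `ℝ²` whose four endpoints are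
not all collinear, the segments have a common point if and only if the endpoints
of each segment lie on weakly opposite sides of the line through the other
segment. -/
theorem segment_intersection_iff
    (x₁ y₁ x₂ y₂ x₁' y₁' x₂' y₂' : ℝ)
    (hp : ((x₁, y₁) : ℝ × ℝ) ≠ (x₂, y₂))
    (hq : ((x₁', y₁') : ℝ × ℝ) ≠ (x₂', y₂'))
    (hcol : ¬ Collinear ℝ ({(x₁, y₁), (x₂, y₂), (x₁', y₁'), (x₂', y₂')} : Set (ℝ × ℝ))) :
    (segment ℝ ((x₁, y₁) : ℝ × ℝ) (x₂, y₂) ∩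
      segment ℝ ((x₁', y₁') : ℝ × ℝ) (x₂', y₂')).Nonempty ↔
    ((y₂ - y₁) * x₁' - (x₂ - x₁) * y₁' - x₁ * y₂ + y₁ * x₂) *
        ((y₂ - y₁) * x₂' - (x₂ - x₁) * y₂' - x₁ * y₂ + y₁ * x₂) ≤ 0 ∧
      ((y₂' - y₁') * x₁ - (x₂' - x₁') * y₁ - x₁' * y₂' + y₁' * x₂') *
        ((y₂' - y₁') * x₂ - (x₂' - x₁') * y₂ - x₁' * y₂' + y₁' * x₂') ≤ 0 := by
  constructor
  · rintro ⟨⟨zx, zy⟩, hz1, hz2⟩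
    obtain ⟨s, t, hs, ht, hst, hzp⟩ := hz1
    obtain ⟨u, v, hu, hv, huv, hzq⟩ := hz2
    have hpx : s * x₁ + t * x₂ = zx := by
      have := congrArg Prod.fst hzp; simpa using this
    have hpy : s * y₁ + t * y₂ = zy := by
      have := congrArg Prod.snd hzp; simpa using this
    have hqx : u * x₁' + v * x₂' = s * x₁ + t * x₂ := by
      have := congrArg Prod.fst hzq; simp at this; rw [this, hpx]
    have hqy : u * y₁' + v * y₂' = s * y₁ + t * y₂ := by
      have := congrArg Prod.snd hzq; simp at this; rw [this, hpy]
    constructor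
    · refine combo_aux _ _ u v hu hv huv ?_
      linear_combination (y₂ - y₁) * hqx - (x₂ - x₁) * hqy +
        (y₁ * x₂ - x₁ * y₂) * huv - (y₁ * x₂ - x₁ * y₂) * hst
    · refine combo_aux _ _ s t hs ht hst ?_
      linear_combination -(y₂' - y₁') * hqx + (x₂' - x₁') * hqy +
        (y₁' * x₂' - x₁' * y₂') * hst - (y₁' * x₂' - x₁' * y₂') * huv
  · rintro ⟨hab, hcd⟩
    have hK : ((y₂ - y₁) * x₁' - (x₂ - x₁) * y₁' - x₁ * y₂ + y₁ * x₂) -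
        ((y₂ - y₁) * x₂' - (x₂ - x₁) * y₂' - x₁ * y₂ + y₁ * x₂) ≠ 0 := by
      intro h
      have hA : (y₂ - y₁) * x₁' - (x₂ - x₁) * y₁' - x₁ * y₂ + y₁ * x₂ = 0 := by
        nlinarith [mul_self_nonneg ((y₂ - y₁) * x₁' - (x₂ - x₁) * y₁' - x₁ * y₂ + y₁ * x₂)]
      have hB : (y₂ - y₁) * x₂' - (x₂ - x₁) * y₂' - x₁ * y₂ + y₁ * x₂ = 0 := by
        linarith
      exact hcol (collinear_aux x₁ y₁ x₂ y₂ x₁' y₁' x₂' y₂' hp hA hB)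
    have hK' : ((y₂' - y₁') * x₁ - (x₂' - x₁') * y₁ - x₁' * y₂' + y₁' * x₂') -
        ((y₂' - y₁') * x₂ - (x₂' - x₁') * y₂ - x₁' * y₂' + y₁' * x₂') ≠ 0 := by
      intro h; apply hK; linear_combination -h
    obtain ⟨ht0, ht1⟩ := div_bounds_aux _ _ hab hK
    obtain ⟨hu0, hu1⟩ := div_bounds_aux _ _ hcd hK'
    have hx := seg_point_aux ((y₂ - y₁) * x₁' - (x₂ - x₁) * y₁' - x₁ * y₂ + y₁ * x₂)
      ((y₂ - y₁) * x₂' - (x₂ - x₁) * y₂' - x₁ * y₂ + y₁ * x₂)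
      ((y₂' - y₁') * x₁ - (x₂' - x₁') * y₁ - x₁' * y₂' + y₁' * x₂')
      ((y₂' - y₁') * x₂ - (x₂' - x₁') * y₂ - x₁' * y₂' + y₁' * x₂')
      x₁ x₂ x₁' x₂' hK hK' (by ring)
    have hy := seg_point_aux ((y₂ - y₁) * x₁' - (x₂ - x₁) * y₁' - x₁ * y₂ + y₁ * x₂)
      ((y₂ - y₁) * x₂' - (x₂ - x₁) * y₂' - x₁ * y₂ + y₁ * x₂)
      ((y₂' - y₁') * x₁ - (x₂' - x₁') * y₁ - x₁' * y₂' + y₁' * x₂')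
      ((y₂' - y₁') * x₂ - (x₂' - x₁') * y₂ - x₁' * y₂' + y₁' * x₂')
      y₁ y₂ y₁' y₂' hK hK' (by ring)
    set t := ((y₂ - y₁) * x₁' - (x₂ - x₁) * y₁' - x₁ * y₂ + y₁ * x₂) /
      (((y₂ - y₁) * x₁' - (x₂ - x₁) * y₁' - x₁ * y₂ + y₁ * x₂) -
       ((y₂ - y₁) * x₂' - (x₂ - x₁) * y₂' - x₁ * y₂ + y₁ * x₂)) with ht_def
    set u := ((y₂' - y₁') * x₁ - (x₂' - x₁') * y₁ - x₁' * y₂' + y₁' * x₂') /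
      (((y₂' - y₁') * x₁ - (x₂' - x₁') * y₁ - x₁' * y₂' + y₁' * x₂') -
       ((y₂' - y₁') * x₂ - (x₂' - x₁') * y₂ - x₁' * y₂' + y₁' * x₂')) with hu_def
    refine ⟨((1 - t) * x₁' + t * x₂', (1 - t) * y₁' + t * y₂'),
      ⟨1 - u, u, by linarith, hu0, by ring, ?_⟩,
      ⟨1 - t, t, by linarith, ht0, by ring, ?_⟩⟩
    · simp only [Prod.smul_mk, Prod.mk_add_mk, Prod.mk.injEq, smul_eq_mul]
      exact ⟨hx.symm, hy.symm⟩
    · simp only [Prod.smul_mk, Prod.mk_add_mk, Prod.mk.injEq, smul_eq_mul]
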